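/- Let K and L be nonzero positive semidefinite operators on a finite-dimensional complex Hilbert space and set M := K + L. Then Tr[K M^{-1/2} L M^{-1/2}] ≤ (1/2)(Tr[K + L] − Tr|K − L|), where |A| := √(A†A) and M^{-1/2} is the inverse square root of M on its support (Moore–Penrose convention). -/

import Mathlib

open scoped BigOperators Kronecker ComplexOrder
open Matrix

noncomputable section

/-- Fractional power (functional calculus on the support, `0^t := 0` for `t ≠ 0`,
which also implements the Moore–Penrose pseudo-inverse convention for negative
exponents) of a Hermitian matrix; junk value `0` for non-Hermitian matrices. -/
noncomputable def mrpow {m : Type*} [Fintype m] [DecidableEq m]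
    (A : Matrix m m ℂ) (t : ℝ) : Matrix m m ℂ :=
  if hA : A.IsHermitian then
    (hA.eigenvectorUnitary : Matrix m m ℂ) *
      Matrix.diagonal (fun i => ((hA.eigenvalues i ^ t : ℝ) : ℂ)) *
      star (hA.eigenvectorUnitary : Matrix m m ℂ)
  else 0

/-- Matrix logarithm on the support (eigenvalue `0 ↦ 0`, since `Real.log 0 = 0`)
of a Hermitian matrix; junk value `0` otherwise. -/
noncomputable def mlog {m : Type*} [Fintype m] [DecidableEq m]
    (A : Matrix m m ℂ) : Matrix m m ℂ :=
  if hA : A.IsHermitian then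
    (hA.eigenvectorUnitary : Matrix m m ℂ) *
      Matrix.diagonal (fun i => ((Real.log (hA.eigenvalues i) : ℝ) : ℂ)) *
      star (hA.eigenvectorUnitary : Matrix m m ℂ)
  else 0

/-- Trace norm `‖A‖₁ = Tr √(AᴴA)`. -/
noncomputable def traceNorm {m : Type*} [Fintype m] [DecidableEq m]
    (A : Matrix m m ℂ) : ℝ :=
  ((mrpow (Aᴴ * A) (1/2)).trace).re

namespace TraceIneqAux

variable {m : Type*} [Fintype m] [DecidableEq m]

/-- Functional calculus of a Hermitian matrix. -/
noncomputable def funCalc {A : Matrix m m ℂ} (hA : A.IsHermitian) (f : ℝ → ℝ) :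
    Matrix m m ℂ :=
  (hA.eigenvectorUnitary : Matrix m m ℂ) *
    Matrix.diagonal (fun i => ((f (hA.eigenvalues i) : ℝ) : ℂ)) *
    star (hA.eigenvectorUnitary : Matrix m m ℂ)

variable {A : Matrix m m ℂ} (hA : A.IsHermitian)

lemma funCalc_mul (f g h : ℝ → ℝ)
    (hfg : ∀ i, f (hA.eigenvalues i) * g (hA.eigenvalues i) = h (hA.eigenvalues i)) :
    funCalc hA f * funCalc hA g = funCalc hA h := by
  have hU : star (hA.eigenvectorUnitary : Matrix m m ℂ) *
      (hA.eigenvectorUnitary : Matrix m m ℂ) = 1 :=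
    Matrix.mem_unitaryGroup_iff'.mp hA.eigenvectorUnitary.2
  have hd : (fun i => ((f (hA.eigenvalues i) : ℝ) : ℂ) * ((g (hA.eigenvalues i) : ℝ) : ℂ))
      = fun i => ((h (hA.eigenvalues i) : ℝ) : ℂ) := by
    funext i
    rw [← Complex.ofReal_mul, hfg i]
  unfold funCalc
  simp only [Matrix.mul_assoc]
  rw [← Matrix.mul_assoc (star (hA.eigenvectorUnitary : Matrix m m ℂ))
      (hA.eigenvectorUnitary : Matrix m m ℂ), hU, Matrix.one_mul,
    ← Matrix.mul_assoc (Matrix.diagonal fun i => ((f (hA.eigenvalues i) : ℝ) : ℂ))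
      (Matrix.diagonal fun i => ((g (hA.eigenvalues i) : ℝ) : ℂ)),
    Matrix.diagonal_mul_diagonal, hd]

lemma funCalc_isHermitian (f : ℝ → ℝ) : (funCalc hA f).IsHermitian := by
  unfold funCalc
  rw [Matrix.star_eq_conjTranspose]
  exact Matrix.isHermitian_mul_mul_conjTranspose _
    (Matrix.isHermitian_diagonal_of_self_adjoint _ (by
      funext i
      simp [Pi.star_def, Complex.conj_ofReal]))

lemma funCalc_trace (f : ℝ → ℝ) :
    (funCalc hA f).trace = ∑ i, ((f (hA.eigenvalues i) : ℝ) : ℂ) := by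
  have hU : star (hA.eigenvectorUnitary : Matrix m m ℂ) *
      (hA.eigenvectorUnitary : Matrix m m ℂ) = 1 :=
    Matrix.mem_unitaryGroup_iff'.mp hA.eigenvectorUnitary.2
  unfold funCalc
  rw [Matrix.trace_mul_comm, ← Matrix.mul_assoc, hU, Matrix.one_mul, Matrix.trace_diagonal]

lemma funCalc_posSemidef (f : ℝ → ℝ) (hf : ∀ i, 0 ≤ f (hA.eigenvalues i)) :
    (funCalc hA f).PosSemidef := by
  unfold funCalc
  rw [Matrix.star_eq_conjTranspose]
  apply Matrix.PosSemidef.mul_mul_conjTranspose_same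
  rw [Matrix.posSemidef_diagonal_iff]
  intro i
  exact_mod_cast hf i

lemma funCalc_id : funCalc hA id = A := by
  unfold funCalc
  exact (hA.spectral_theorem).symm

lemma funCalc_one : funCalc hA (fun _ => 1) = 1 := by
  have hU : (hA.eigenvectorUnitary : Matrix m m ℂ) *
      star (hA.eigenvectorUnitary : Matrix m m ℂ) = 1 :=
    Matrix.mem_unitaryGroup_iff.mp hA.eigenvectorUnitary.2
  unfold funCalc
  simp [hU]

end TraceIneqAux

namespace TraceIneqAux2
open TraceIneqAux

set_option linter.unusedSectionVars false

variable {m : Type*} [Fintype m] [DecidableEq m]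

lemma trace_re_eq (A B : Matrix m m ℂ) :
    ((Aᴴ * B).trace).re = ∑ j, ∑ i, (star (A i j) * B i j).re := by
  simp [Matrix.trace, Matrix.diag, Matrix.mul_apply, Matrix.conjTranspose_apply,
    Complex.re_sum]

lemma star_mul_self_re (z : ℂ) : (star z * z).re = ‖z‖ ^ 2 := by
  rw [Complex.star_def, mul_comm, Complex.mul_conj]
  rw [Complex.normSq_eq_norm_sq]
  exact Complex.ofReal_re _

lemma trace_self_eq (A : Matrix m m ℂ) :
    ((Aᴴ * A).trace).re = ∑ j, ∑ i, ‖A i j‖ ^ 2 := by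
  rw [trace_re_eq]
  exact Finset.sum_congr rfl fun j _ => Finset.sum_congr rfl fun i _ => star_mul_self_re _

lemma trace_self_nonneg (A : Matrix m m ℂ) : 0 ≤ ((Aᴴ * A).trace).re := by
  rw [trace_self_eq]
  positivity

lemma real_cs (f g : m × m → ℝ) (hf : ∀ p, 0 ≤ f p) (hg : ∀ p, 0 ≤ g p) :
    ∑ p : m × m, f p * g p ≤
      Real.sqrt (∑ p : m × m, f p ^ 2) * Real.sqrt (∑ p : m × m, g p ^ 2) := by
  have h := Finset.sum_mul_sq_le_sq_mul_sq Finset.univ f g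
  have hnn : 0 ≤ ∑ p : m × m, f p * g p :=
    Finset.sum_nonneg fun p _ => mul_nonneg (hf p) (hg p)
  calc ∑ p : m × m, f p * g p = Real.sqrt ((∑ p : m × m, f p * g p) ^ 2) :=
        (Real.sqrt_sq hnn).symm
    _ ≤ Real.sqrt ((∑ p : m × m, f p ^ 2) * ∑ p : m × m, g p ^ 2) := Real.sqrt_le_sqrt h
    _ = _ := Real.sqrt_mul (Finset.sum_nonneg fun p _ => sq_nonneg _) _

lemma trace_cs (A B : Matrix m m ℂ) :
    ((Aᴴ * B).trace).re ≤
      Real.sqrt (((Aᴴ * A).trace).re) * Real.sqrt (((Bᴴ * B).trace).re) := by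
  rw [trace_re_eq, trace_self_eq, trace_self_eq]
  have h1 : ∀ (C : Matrix m m ℂ), ∑ j, ∑ i, ‖C i j‖ ^ 2
      = ∑ p : m × m, ‖C p.2 p.1‖ ^ 2 := by
    intro C
    rw [← Finset.univ_product_univ, Finset.sum_product]
  rw [h1, h1]
  calc ∑ j, ∑ i, (star (A i j) * B i j).re
      ≤ ∑ j, ∑ i, ‖A i j‖ * ‖B i j‖ := by
        refine Finset.sum_le_sum fun j _ => Finset.sum_le_sum fun i _ => ?_
        calc (star (A i j) * B i j).re ≤ ‖star (A i j) * B i j‖ :=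
              Complex.re_le_norm _
          _ = ‖A i j‖ * ‖B i j‖ := by
              rw [norm_mul, Complex.star_def, Complex.norm_conj]
    _ = ∑ p : m × m, ‖A p.2 p.1‖ * ‖B p.2 p.1‖ := by
        rw [← Finset.univ_product_univ, Finset.sum_product]
    _ ≤ _ := real_cs _ _ (fun p => norm_nonneg _) (fun p => norm_nonneg _)

lemma psd_eq_zero_of_add {A B : Matrix m m ℂ} (hA : A.PosSemidef) (hB : B.PosSemidef)
    (h : A + B = 0) : A = 0 := by
  have hx : ∀ x : m → ℂ, A *ᵥ x = 0 := by
    intro x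
    have h1 : star x ⬝ᵥ A *ᵥ x + star x ⬝ᵥ B *ᵥ x = 0 := by
      rw [← dotProduct_add, ← add_mulVec, h, zero_mulVec, dotProduct_zero]
    have h2 : star x ⬝ᵥ A *ᵥ x = 0 := by
      refine le_antisymm ?_ (hA.dotProduct_mulVec_nonneg x)
      rw [eq_neg_of_add_eq_zero_left h1]
      exact neg_nonpos.mpr (hB.dotProduct_mulVec_nonneg x)
    exact (hA.dotProduct_mulVec_zero_iff x).mp h2
  ext i j
  have := congrFun (hx (Pi.single j 1)) i
  simpa [Matrix.mulVec_single] using this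

open scoped MatrixOrder in
lemma psd_mul_eq_zero_of_conj {A C : Matrix m m ℂ} (hA : A.PosSemidef)
    (hC : C.IsHermitian) (h : C * A * C = 0) : A * C = 0 := by
  have hs := CFC.sqrt_mul_sqrt_self A hA.nonneg
  have hB : (CFC.sqrt A * C)ᴴ * (CFC.sqrt A * C) = 0 := by
    rw [Matrix.conjTranspose_mul, (CFC.sqrt_nonneg A).posSemidef.1.eq, hC.eq]
    calc C * CFC.sqrt A * (CFC.sqrt A * C) = C * (CFC.sqrt A * CFC.sqrt A) * C := by noncomm_ring
      _ = 0 := by rw [hs, h]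
  have hz : CFC.sqrt A * C = 0 := Matrix.conjTranspose_mul_self_eq_zero.mp hB
  calc A * C = CFC.sqrt A * (CFC.sqrt A * C) := by rw [← Matrix.mul_assoc, hs]
    _ = 0 := by rw [hz, Matrix.mul_zero]

end TraceIneqAux2

set_option maxHeartbeats 2000000 in
open TraceIneqAux TraceIneqAux2 in
open scoped MatrixOrder in
/-- For nonzero positive semidefinite operators `K, L` with `M := K + L`,
`Tr[K M^{-1/2} L M^{-1/2}] ≤ (1/2)(Tr[K + L] − Tr|K − L|)`. -/
theorem trace_inequality_via_abs {d : ℕ} (K L : Matrix (Fin d) (Fin d) ℂ)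
    (hK : K.PosSemidef) (hL : L.PosSemidef) (hK0 : K ≠ 0) (hL0 : L ≠ 0) :
    ((K * mrpow (K + L) (-(1/2)) * L * mrpow (K + L) (-(1/2))).trace).re ≤
      (1/2) * (((K + L).trace).re - traceNorm (K - L)) := by
  have hMps : (K + L).PosSemidef := hK.add hL
  have hM : (K + L).IsHermitian := hMps.1
  have hD : (K - L).IsHermitian := hK.1.sub hL.1
  have hMev : ∀ i, 0 ≤ hM.eigenvalues i := hMps.eigenvalues_nonneg
  set S := funCalc hM (fun x => x ^ (-(1/2) : ℝ)) with hSdef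
  set R := funCalc hM (fun x => x ^ ((1/2) : ℝ)) with hRdef
  set W := funCalc hM (fun x => x ^ ((1/4) : ℝ)) with hWdef
  set P := funCalc hM (fun x => if x = 0 then (0:ℝ) else 1) with hPdef
  have hmr : mrpow (K + L) (-(1/2)) = S := by
    rw [hSdef]; unfold mrpow funCalc; rw [dif_pos hM]
  -- pointwise identities
  have h2 : ∀ x : ℝ, 0 ≤ x → x ^ ((1/2):ℝ) * x ^ ((1/2):ℝ) = x := by
    intro x hx; rw [← Real.sqrt_eq_rpow]; exact Real.mul_self_sqrt hx
  have h4 : ∀ x : ℝ, 0 ≤ x → x ^ ((1/4):ℝ) * x ^ ((1/4):ℝ) = x ^ ((1/2):ℝ) := by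
    intro x hx
    rcases hx.lt_or_eq with h | h
    · rw [← Real.rpow_add h]; norm_num
    · rw [← h, Real.zero_rpow (by norm_num), Real.zero_rpow (by norm_num), mul_zero]
  have hms : ∀ x : ℝ, 0 ≤ x → x * x ^ (-(1/2):ℝ) = x ^ ((1/2):ℝ) := by
    intro x hx
    rcases hx.lt_or_eq with h | h
    · have hr := Real.rpow_add h 1 (-(1/2))
      rw [Real.rpow_one] at hr
      rw [← hr]; norm_num
    · rw [← h, Real.zero_rpow (by norm_num), Real.zero_rpow (by norm_num), mul_zero]
  have hsr : ∀ x : ℝ, 0 ≤ x →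
      x ^ (-(1/2):ℝ) * x ^ ((1/2):ℝ) = (if x = 0 then (0:ℝ) else 1) := by
    intro x hx
    rcases hx.lt_or_eq with h | h
    · rw [← Real.rpow_add h, if_neg (ne_of_gt h)]; norm_num
    · rw [← h, Real.zero_rpow (by norm_num), zero_mul, if_pos rfl]
  have hpm : ∀ x : ℝ, 0 ≤ x → (if x = 0 then (0:ℝ) else 1) * x = x := by
    intro x _
    rcases eq_or_ne x 0 with h | h
    · rw [if_pos h, h, mul_zero]
    · rw [if_neg h, one_mul]
  -- matrix identities
  have hRh : R.IsHermitian := funCalc_isHermitian hM _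
  have hSh : S.IsHermitian := funCalc_isHermitian hM _
  have hWh : W.IsHermitian := funCalc_isHermitian hM _
  have hPh : P.IsHermitian := funCalc_isHermitian hM _
  have hRR : R * R = K + L := by
    rw [hRdef, funCalc_mul hM _ _ id (fun i => h2 _ (hMev i))]; exact funCalc_id hM
  have hWW : W * W = R := funCalc_mul hM _ _ _ (fun i => h4 _ (hMev i))
  have hMS : (K + L) * S = R := by
    conv_lhs => rw [← funCalc_id hM]
    exact funCalc_mul hM _ _ _ (fun i => hms _ (hMev i))
  have hSR : S * R = P := funCalc_mul hM _ _ _ (fun i => hsr _ (hMev i))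
  have hRS : R * S = P :=
    funCalc_mul hM _ _ _ (fun i => by rw [mul_comm]; exact hsr _ (hMev i))
  have hPM : P * (K + L) = K + L := by
    conv_lhs => rw [← funCalc_id hM]
    rw [hPdef, funCalc_mul hM (fun x => if x = 0 then (0:ℝ) else 1) id id
      (fun i => hpm _ (hMev i))]
    exact funCalc_id hM
  clear_value S R W P
  -- support facts
  have h1Ph : ((1 : Matrix (Fin d) (Fin d) ℂ) - P).IsHermitian :=
    Matrix.isHermitian_one.sub hPh
  have hzero : ((1 : Matrix (Fin d) (Fin d) ℂ) - P) * (K + L) * (1 - P) = 0 := by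
    rw [Matrix.sub_mul, Matrix.one_mul, hPM, sub_self, Matrix.zero_mul]
  have hcK : (((1 : Matrix (Fin d) (Fin d) ℂ) - P) * K * (1 - P)).PosSemidef := by
    have := hK.mul_mul_conjTranspose_same ((1 : Matrix (Fin d) (Fin d) ℂ) - P)
    rwa [h1Ph.eq] at this
  have hcL : (((1 : Matrix (Fin d) (Fin d) ℂ) - P) * L * (1 - P)).PosSemidef := by
    have := hL.mul_mul_conjTranspose_same ((1 : Matrix (Fin d) (Fin d) ℂ) - P)
    rwa [h1Ph.eq] at this
  have hsum : ((1 : Matrix (Fin d) (Fin d) ℂ) - P) * K * (1 - P)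
      + (1 - P) * L * (1 - P) = 0 := by
    rw [← hzero]; noncomm_ring
  have hKz : ((1 : Matrix (Fin d) (Fin d) ℂ) - P) * K * (1 - P) = 0 :=
    psd_eq_zero_of_add hcK hcL hsum
  have hLz : ((1 : Matrix (Fin d) (Fin d) ℂ) - P) * L * (1 - P) = 0 :=
    psd_eq_zero_of_add hcL hcK (by rw [← hsum]; noncomm_ring)
  have hKPe : K * P = K := by
    have h0 := psd_mul_eq_zero_of_conj hK h1Ph hKz
    rw [Matrix.mul_sub, Matrix.mul_one, sub_eq_zero] at h0
    exact h0.symm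
  have hLPe : L * P = L := by
    have h0 := psd_mul_eq_zero_of_conj hL h1Ph hLz
    rw [Matrix.mul_sub, Matrix.mul_one, sub_eq_zero] at h0
    exact h0.symm
  have hPKe : P * K = K := by
    calc P * K = (K * P)ᴴ := by rw [Matrix.conjTranspose_mul, hPh.eq, hK.1.eq]
      _ = K := by rw [hKPe, hK.1.eq]
  have hPLe : P * L = L := by
    calc P * L = (L * P)ᴴ := by rw [Matrix.conjTranspose_mul, hPh.eq, hL.1.eq]
      _ = L := by rw [hLPe, hL.1.eq]
  have hDP : (K - L) * P = K - L := by rw [Matrix.sub_mul, hKPe, hLPe]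
  have hPD : P * (K - L) = K - L := by rw [Matrix.mul_sub, hPKe, hPLe]
  -- the key complex identity
  have hexpand : (K + L) * S * ((K + L) * S)
      = K * S * (K * S) + K * S * (L * S) + L * S * (K * S) + L * S * (L * S) := by
    noncomm_ring
  have hexpand2 : (K - L) * S * ((K - L) * S)
      = K * S * (K * S) - K * S * (L * S) - L * S * (K * S) + L * S * (L * S) := by
    noncomm_ring
  have hcyc : ((L * S) * (K * S)).trace = ((K * S) * (L * S)).trace :=
    Matrix.trace_mul_comm _ _
  have hMSMS : ((K + L) * S * ((K + L) * S)).trace = (K + L).trace := by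
    rw [hMS, hRR]
  have hmain : 4 * (K * S * (L * S)).trace
      = (K + L).trace - ((K - L) * S * ((K - L) * S)).trace := by
    rw [← hMSMS, hexpand, hexpand2]
    rw [Matrix.trace_add, Matrix.trace_add, Matrix.trace_add, Matrix.trace_add,
      Matrix.trace_sub, Matrix.trace_sub]
    rw [show (L * S * (K * S)).trace = ((K * S) * (L * S)).trace from hcyc]
    ring
  -- sign unitary
  set U := funCalc hD (fun x => if 0 ≤ x then (1:ℝ) else -1) with hUdef
  have hUh : U.IsHermitian := funCalc_isHermitian hD _
  have hUU : U * U = 1 := by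
    rw [hUdef, funCalc_mul hD _ _ (fun _ => 1) (fun i => ?_), funCalc_one]
    rcases le_or_gt 0 (hD.eigenvalues i) with h | h
    · simp only [if_pos h]; norm_num
    · simp only [if_neg (not_le.mpr h)]; norm_num
  clear_value U
  -- trace norm computation
  have hP2 : ((K - L)ᴴ * (K - L)).PosSemidef := Matrix.posSemidef_conjTranspose_mul_self _
  have habs : mrpow ((K - L)ᴴ * (K - L)) (1/2) = funCalc hD (fun x => |x|) := by
    have hP2h : ((K - L)ᴴ * (K - L)).IsHermitian := hP2.1
    have hstep : mrpow ((K - L)ᴴ * (K - L)) (1/2)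
        = funCalc hP2h (fun x => x ^ ((1/2):ℝ)) := by
      unfold mrpow funCalc; rw [dif_pos hP2h]
    rw [hstep]
    have hA1ps : (funCalc hP2h (fun x => x ^ ((1/2):ℝ))).PosSemidef :=
      funCalc_posSemidef _ _ (fun i => Real.rpow_nonneg (hP2.eigenvalues_nonneg i) _)
    have hQps : (funCalc hD (fun x => |x|)).PosSemidef :=
      funCalc_posSemidef _ _ (fun i => abs_nonneg _)
    refine (CFC.sqrt_unique (sq _).symm hA1ps.nonneg).symm.trans
      ((congrArg CFC.sqrt ?_).trans (CFC.sqrt_unique (sq _).symm hQps.nonneg))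
    have e1 : funCalc hP2h (fun x => x ^ ((1/2):ℝ)) ^ 2 = (K - L)ᴴ * (K - L) := by
      rw [pow_two, funCalc_mul hP2h _ _ id (fun i => h2 _ (hP2.eigenvalues_nonneg i))]
      exact funCalc_id hP2h
    have e2 : funCalc hD (fun x => |x|) ^ 2 = (K - L)ᴴ * (K - L) := by
      rw [pow_two, funCalc_mul hD _ _ (fun x => x * x) (fun i => abs_mul_abs_self _)]
      rw [← funCalc_mul hD id id (fun x => x * x) (fun i => rfl), funCalc_id, hD.eq]
    rw [e1, e2]
  have hn : traceNorm (K - L) = ∑ i, |hD.eigenvalues i| := by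
    rw [traceNorm, habs, funCalc_trace, Complex.re_sum]
    simp
  have hUD : ((U * (K - L)).trace).re = ∑ i, |hD.eigenvalues i| := by
    conv_lhs => rw [← funCalc_id hD]
    rw [hUdef, funCalc_mul hD (fun x => if 0 ≤ x then (1:ℝ) else -1) id (fun x => |x|)
        (fun i => ?_), funCalc_trace, Complex.re_sum]
    · simp
    · rcases le_or_gt 0 (hD.eigenvalues i) with h | h
      · simp only [if_pos h, one_mul, id_eq]
        exact (abs_of_nonneg h).symm
      · simp only [if_neg (not_le.mpr h), neg_one_mul, id_eq]
        exact (abs_of_neg h).symm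
  -- Z and reconstruction
  have hZh : (S * (K - L) * S).IsHermitian := by
    have := Matrix.isHermitian_mul_mul_conjTranspose S hD
    rwa [hSh.eq] at this
  have hDrec : R * (S * (K - L) * S) * R = K - L := by
    have h1 : R * (S * (K - L) * S) * R = (R * S) * (K - L) * (S * R) := by
      noncomm_ring
    rw [h1, hRS, hSR, hPD, hDP]
  -- splitting the trace
  have hsplit : (U * (K - L)).trace
      = ((W * U * W) * (W * (S * (K - L) * S) * W)).trace := by
    conv_lhs => rw [← hDrec]
    have h1 : U * (R * (S * (K - L) * S) * R)
        = (U * W * (W * (S * (K - L) * S) * W)) * W := by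
      rw [← hWW]; noncomm_ring
    rw [h1, Matrix.trace_mul_comm]
    congr 1
    noncomm_ring
  have hA2h : (W * U * W).IsHermitian := by
    have := Matrix.isHermitian_mul_mul_conjTranspose W hUh
    rwa [hWh.eq] at this
  have hB2h : (W * (S * (K - L) * S) * W).IsHermitian := by
    have := Matrix.isHermitian_mul_mul_conjTranspose W hZh
    rwa [hWh.eq] at this
  -- first factor bound
  have hm0 : 0 ≤ ((K + L).trace).re := by
    have : (K + L).trace.re = ∑ i, hM.eigenvalues i := by
      conv_lhs => rw [← funCalc_id hM]
      rw [funCalc_trace, Complex.re_sum]; simp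
    rw [this]
    exact Finset.sum_nonneg fun i _ => hMev i
  have hURUR : ((U * R * (U * R)).trace).re ≤ ((K + L).trace).re := by
    have hct : (U * R)ᴴ = R * U := by
      rw [Matrix.conjTranspose_mul, hUh.eq, hRh.eq]
    have f1 : (((U * R)ᴴ)ᴴ * (U * R)ᴴ).trace = (K + L).trace := by
      rw [Matrix.conjTranspose_conjTranspose, hct]
      calc ((U * R) * (R * U)).trace = ((U * (R * R)) * U).trace := by
            congr 1; noncomm_ring
        _ = (U * (U * (R * R))).trace := Matrix.trace_mul_comm _ _
        _ = (K + L).trace := by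
            rw [show U * (U * (R * R)) = (U * U) * (R * R) from by noncomm_ring,
              hUU, hRR, Matrix.one_mul]
    have f2 : ((U * R)ᴴ * (U * R)).trace = (K + L).trace := by
      rw [hct]
      calc ((R * U) * (U * R)).trace = ((R * (U * U)) * R).trace := by
            congr 1; noncomm_ring
        _ = (K + L).trace := by rw [hUU, Matrix.mul_one, hRR]
    calc ((U * R * (U * R)).trace).re = ((((U * R)ᴴ)ᴴ * (U * R)).trace).re := by
          rw [Matrix.conjTranspose_conjTranspose]
      _ ≤ Real.sqrt ((((U * R)ᴴ)ᴴ * (U * R)ᴴ).trace).re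
            * Real.sqrt (((U * R)ᴴ * (U * R)).trace).re := trace_cs _ _
      _ = Real.sqrt ((K + L).trace).re * Real.sqrt ((K + L).trace).re := by
          rw [f1, f2]
      _ = ((K + L).trace).re := Real.mul_self_sqrt hm0
  -- compute factor traces of the main CS
  have hA2sq : ((W * U * W)ᴴ * (W * U * W)).trace = (U * R * (U * R)).trace := by
    rw [hA2h.eq]
    have h1 : (W * U * W) * (W * U * W) = W * (U * (W * W) * U) * W := by noncomm_ring
    rw [h1, hWW]
    calc (W * (U * R * U) * W).trace
        = (W * (W * (U * R * U))).trace := Matrix.trace_mul_comm _ _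
      _ = ((W * W) * (U * R * U)).trace := by congr 1; noncomm_ring
      _ = (R * (U * R * U)).trace := by rw [hWW]
      _ = ((U * R * U) * R).trace := Matrix.trace_mul_comm _ _
      _ = (U * R * (U * R)).trace := by congr 1; noncomm_ring
  have hZR : (S * (K - L) * S) * R = S * (K - L) := by
    rw [Matrix.mul_assoc, hSR, Matrix.mul_assoc, hDP]
  have hB2sq : ((W * (S * (K - L) * S) * W)ᴴ * (W * (S * (K - L) * S) * W)).trace
      = ((K - L) * S * ((K - L) * S)).trace := by
    rw [hB2h.eq]
    have h1 : (W * (S * (K - L) * S) * W) * (W * (S * (K - L) * S) * W)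
        = W * ((S * (K - L) * S) * (W * W) * (S * (K - L) * S)) * W := by noncomm_ring
    rw [h1, hWW]
    calc (W * ((S * (K - L) * S) * R * (S * (K - L) * S)) * W).trace
        = (W * (W * ((S * (K - L) * S) * R * (S * (K - L) * S)))).trace :=
          Matrix.trace_mul_comm _ _
      _ = ((W * W) * ((S * (K - L) * S) * R * (S * (K - L) * S))).trace := by
          congr 1; noncomm_ring
      _ = (R * ((S * (K - L) * S) * R * (S * (K - L) * S))).trace := by rw [hWW]
      _ = (((S * (K - L) * S) * R * (S * (K - L) * S)) * R).trace :=
          Matrix.trace_mul_comm _ _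
      _ = ((S * (K - L) * S * R) * (S * (K - L) * S * R)).trace := by
          congr 1; noncomm_ring
      _ = ((S * (K - L)) * (S * (K - L))).trace := by rw [hZR]
      _ = (S * ((K - L) * (S * (K - L)))).trace := by congr 1; noncomm_ring
      _ = (((K - L) * (S * (K - L))) * S).trace := Matrix.trace_mul_comm _ _
      _ = ((K - L) * S * ((K - L) * S)).trace := by congr 1; noncomm_ring
  have ht0 : 0 ≤ (((K - L) * S * ((K - L) * S)).trace).re := by
    rw [← hB2sq]
    exact trace_self_nonneg _
  -- main Cauchy-Schwarz chain
  have hkey : ∑ i, |hD.eigenvalues i|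
      ≤ Real.sqrt (((K + L).trace).re)
        * Real.sqrt ((((K - L) * S * ((K - L) * S)).trace).re) := by
    have hcs := trace_cs (W * U * W) (W * (S * (K - L) * S) * W)
    rw [hA2sq, hB2sq] at hcs
    have hstep : ((U * (K - L)).trace).re
        = (((W * U * W)ᴴ * (W * (S * (K - L) * S) * W)).trace).re := by
      rw [hA2h.eq, hsplit]
    rw [← hUD]
    calc ((U * (K - L)).trace).re
        ≤ Real.sqrt ((U * R * (U * R)).trace).re
          * Real.sqrt (((K - L) * S * ((K - L) * S)).trace).re := by
          rw [hstep]; exact hcs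
      _ ≤ _ := by
          apply mul_le_mul_of_nonneg_right _ (Real.sqrt_nonneg _)
          exact Real.sqrt_le_sqrt hURUR
  have hamgm : 2 * (∑ i, |hD.eigenvalues i|)
      ≤ ((K + L).trace).re + (((K - L) * S * ((K - L) * S)).trace).re := by
    have h1 := hkey
    nlinarith [Real.sq_sqrt hm0, Real.sq_sqrt ht0, Real.sqrt_nonneg (((K + L).trace).re),
      Real.sqrt_nonneg ((((K - L) * S * ((K - L) * S)).trace).re),
      sq_nonneg (Real.sqrt (((K + L).trace).re)
        - Real.sqrt ((((K - L) * S * ((K - L) * S)).trace).re))]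
  -- finish
  have hretrace : 4 * ((K * S * (L * S)).trace).re
      = ((K + L).trace).re - (((K - L) * S * ((K - L) * S)).trace).re := by
    have := congrArg Complex.re hmain
    simpa [Complex.mul_re, Complex.sub_re] using this
  rw [hmr, Matrix.mul_assoc (K * S) L S, hn]
  linarith [hretrace, hamgm]

end
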